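/- Let f ∈ ℂ[X] have degree n and distinct roots z₁,…,z_m with multiplicities μ₁,…,μ_m. Then |lc(f)|^{n-2} · ∏_{i} |f^{[μᵢ]}(zᵢ)|^{μᵢ} = |lc(f)|^{2n-2} · ∏_{i ≠ j} |zᵢ − z_j|^{μᵢ μ_j}. -/

import Mathlib

open Polynomial

lemma prod_offDiag_aux (m : ℕ) (F : Fin m × Fin m → ℝ) :
    ∏ p ∈ Finset.univ.offDiag, F p = ∏ i, ∏ j ∈ Finset.univ.erase i, F (i, j) := by
  rw [Finset.prod_finset_product _ Finset.univ (fun i => Finset.univ.erase i)]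
  intro p
  simp [Finset.mem_offDiag, ne_comm]

lemma hasse_eval_aux (k : ℕ) (a : ℂ) (g : ℂ[X]) :
    (hasseDeriv k ((X - C a) ^ k * g)).eval a = g.eval a := by
  rw [← taylor_coeff]
  have h : taylor a ((X - C a) ^ k * g) = X ^ k * taylor a g := by
    simp [taylor_apply, mul_comp, pow_comp, sub_comp]
  rw [h]
  have := Polynomial.coeff_X_pow_mul (taylor a g) k 0
  simpa [coeff_zero_eq_eval_zero, taylor_apply] using this

lemma deriv_eval_aux (k : ℕ) (a : ℂ) (g : ℂ[X]) :
    (derivative^[k] ((X - C a) ^ k * g)).eval a / (Nat.factorial k : ℂ) = g.eval a := by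
  have hk : (Nat.factorial k : ℂ) ≠ 0 := Nat.cast_ne_zero.mpr (Nat.factorial_ne_zero k)
  have h : derivative^[k] ((X - C a) ^ k * g)
      = (Nat.factorial k) • hasseDeriv k ((X - C a) ^ k * g) := by
    rw [← factorial_smul_hasseDeriv]; rfl
  rw [h, eval_smul, nsmul_eq_mul, mul_comm, mul_div_assoc, div_self hk, mul_one, hasse_eval_aux]

/-- For f = lc·∏ᵢ (X − zᵢ)^{μᵢ} of degree n = ∑ μᵢ with the zᵢ distinct:
|lc|^{n-2} · ∏ᵢ |f^{[μᵢ]}(zᵢ)|^{μᵢ} = |lc|^{2n-2} · ∏_{i≠j} |zᵢ − z_j|^{μᵢμ_j}. -/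
theorem gdisc_two_expressions (m : ℕ) (z : Fin m → ℂ) (hzinj : Function.Injective z)
    (μ : Fin m → ℕ) (hμ : ∀ i, 1 ≤ μ i) (c : ℂ) (hc : c ≠ 0)
    (f : Polynomial ℂ) (hfz : f = C c * ∏ i, (X - C (z i)) ^ μ i)
    (n : ℕ) (hn : n = ∑ i, μ i) (hn1 : 1 ≤ n) :
    ‖c‖ ^ ((n : ℤ) - 2) *
        ∏ i, ‖(derivative^[μ i] f).eval (z i) / (Nat.factorial (μ i) : ℂ)‖ ^ μ i =
      ‖c‖ ^ (2 * (n : ℤ) - 2) *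
        ∏ p ∈ Finset.univ.offDiag, ‖z p.1 - z p.2‖ ^ (μ p.1 * μ p.2) := by
  -- compute the derivative values
  have key : ∀ i, (derivative^[μ i] f).eval (z i) / (Nat.factorial (μ i) : ℂ)
      = c * ∏ j ∈ Finset.univ.erase i, (z i - z j) ^ μ j := by
    intro i
    have hf' : f = (X - C (z i)) ^ μ i *
        (C c * ∏ j ∈ Finset.univ.erase i, (X - C (z j)) ^ μ j) := by
      rw [hfz, ← Finset.mul_prod_erase Finset.univ _ (Finset.mem_univ i)]
      ring
    rw [hf', deriv_eval_aux]
    simp [eval_prod]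
  have habs : ∀ i, ‖(derivative^[μ i] f).eval (z i) / (Nat.factorial (μ i) : ℂ)‖ ^ μ i
      = ‖c‖ ^ μ i *
        ∏ j ∈ Finset.univ.erase i, ‖z i - z j‖ ^ (μ i * μ j) := by
    intro i
    rw [key i, norm_mul, mul_pow, norm_prod, ← Finset.prod_pow]
    congr 1
    refine Finset.prod_congr rfl fun j _ => ?_
    rw [norm_pow, ← pow_mul, mul_comm (μ j) (μ i)]
  simp only [habs]
  rw [Finset.prod_mul_distrib, Finset.prod_pow_eq_pow_sum, ← hn,
    prod_offDiag_aux m (fun p => ‖z p.1 - z p.2‖ ^ (μ p.1 * μ p.2))]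
  have hca : ‖c‖ ≠ 0 := by simpa using hc
  rw [← mul_assoc]
  congr 1
  rw [← zpow_natCast ‖c‖ n, ← zpow_add₀ hca]
  congr 1
  ring
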